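/- There exists a unique Witt vector b ∈ 𝕎(R) such that for every n ≥ 0 the n-th ghost component of b equals 1 + ε·[p^n]_{q^{p^α}} · ∑_{i=1}^{p−1} q^{i·p^{n+α}−1}·[i·p^α]_{q^{p^{α+n+1}}}. Moreover b is a unit of 𝕎(R). (This is the ghost-component description of the element b of Proposition 3.2, which satisfies g̃([p]_{q^{p^α}}) = f̃([p]_{q^{p^α}})·b for the δ-ring lifts g̃, f̃ of ψ and the inclusion A → R.) -/

import Mathlib

open Finset

/-- The q-analogue `[n]_t = ∑_{i=0}^{n-1} t^i`. -/
def qan {A : Type*} [CommRing A] (t : A) (n : ℕ) : A := ∑ i ∈ Finset.range n, t ^ i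

/-- `A := W(k)⟦q−1⟧`, the power series ring over the `p`-typical Witt vectors of `k`;
`q` denotes `1` plus the power series variable. -/
noncomputable def qq (p : ℕ) [Fact p.Prime] (k : Type*) [CommRing k] :
    PowerSeries (WittVector p k) :=
  1 + PowerSeries.X

/-- The distinguished element `d := [p]_{q^{p^α}}` of `A`. -/
noncomputable def dd (p α : ℕ) [Fact p.Prime] (k : Type*) [CommRing k] :
    PowerSeries (WittVector p k) :=
  qan ((qq p k) ^ p ^ α) p

/-- The polynomial `ε² − q·(q^{p^α}−1)·ε` over `A`, whose adjunction defines `R`. -/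
noncomputable def relPoly (p α : ℕ) [Fact p.Prime] (k : Type*) [CommRing k] :
    Polynomial (PowerSeries (WittVector p k)) :=
  Polynomial.X ^ 2 - Polynomial.C (qq p k * ((qq p k) ^ p ^ α - 1)) * Polynomial.X

/-- `R := A[ε]/(ε² − q·(q^{p^α}−1)·ε)`, a free `A`-module with basis `1, ε`. -/
noncomputable abbrev Rring (p α : ℕ) [Fact p.Prime] (k : Type*) [CommRing k] :=
  AdjoinRoot (relPoly p α k)

/-- `ε ∈ R`. -/
noncomputable def eps (p α : ℕ) [Fact p.Prime] (k : Type*) [CommRing k] : Rring p α k :=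
  AdjoinRoot.root (relPoly p α k)

namespace StmtAux
open Polynomial

section basic
variable {S : Type*} [CommRing S]

theorem map_qan {B : Type*} [CommRing B] (f : S →+* B) (t : S) (n : ℕ) :
    f (qan t n) = qan (f t) n := by simp [qan]

theorem qan_one (t : S) : qan t 1 = 1 := by simp [qan]

theorem qan_add (t : S) (m a : ℕ) : qan t (m + a) = qan t m + t ^ m * qan t a := by
  rw [qan, qan, qan, Finset.sum_range_add, Finset.mul_sum]
  simp [pow_add]

theorem qan_mul (t : S) (a b : ℕ) : qan t a * qan (t ^ a) b = qan t (a * b) := by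
  induction b with
  | zero => simp [qan]
  | succ b ih =>
      rw [Nat.mul_succ, qan_add t (a*b) a, ← ih, qan_add (t^a) b 1, qan_one, mul_one,
        mul_add, ← pow_mul]
      ring

theorem qan_geom (t : S) (n : ℕ) : qan t n * (t - 1) = t ^ n - 1 := geom_sum_mul t n

end basic

section dwork
variable (p : ℕ) [hp : Fact p.Prime] {S : Type*} [CommRing S] (φ : S →+* S) (g : S)

open scoped Classical in
noncomputable def dseq : ℕ → S
  | n =>
    if h : ∃ c : S, (p : S) ^ n * c =
        (⇑φ)^[n] g - ∑ i ∈ (Finset.range n).attach,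
          (p : S) ^ (i : ℕ) * dseq i ^ p ^ (n - (i : ℕ)) then
      h.choose
    else 0
decreasing_by all_goals exact Finset.mem_range.mp i.2

theorem dseq_apply (n : ℕ)
    (h : ∃ c : S, (p : S) ^ n * c =
        (⇑φ)^[n] g - ∑ i ∈ Finset.range n, (p : S) ^ i * dseq p φ g i ^ p ^ (n - i)) :
    (p : S) ^ n * dseq p φ g n =
      (⇑φ)^[n] g - ∑ i ∈ Finset.range n, (p : S) ^ i * dseq p φ g i ^ p ^ (n - i) := by
  have h' : ∃ c : S, (p : S) ^ n * c =
      (⇑φ)^[n] g - ∑ i ∈ (Finset.range n).attach,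
        (p : S) ^ (i : ℕ) * dseq p φ g i ^ p ^ (n - (i : ℕ)) := by
    rwa [Finset.sum_attach (Finset.range n) (fun i => (p : S) ^ i * dseq p φ g i ^ p ^ (n - i))]
  rw [← Finset.sum_attach (Finset.range n) (fun i => (p : S) ^ i * dseq p φ g i ^ p ^ (n - i))]
  rw [dseq, dif_pos h']
  exact h'.choose_spec

theorem dseq_sum (hφ : ∀ x : S, (p : S) ∣ φ x - x ^ p) :
    ∀ n, ∑ i ∈ Finset.range (n + 1), (p : S) ^ i * dseq p φ g i ^ p ^ (n - i) = (⇑φ)^[n] g := by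
  intro n
  induction n with
  | zero =>
      have h0 : ∃ c : S, (p : S) ^ 0 * c =
          (⇑φ)^[0] g - ∑ i ∈ Finset.range 0, (p : S) ^ i * dseq p φ g i ^ p ^ (0 - i) :=
        ⟨g, by simp⟩
      have := dseq_apply p φ g 0 h0
      simp only [Finset.sum_range_zero, Function.iterate_zero,
        pow_zero, one_mul, Nat.sub_zero, id_eq, sub_zero] at this
      simp [Finset.sum_range_one, this]
  | succ n ih =>
      -- key divisibility
      have key : ∃ c : S, (p : S) ^ (n + 1) * c =
          (⇑φ)^[n + 1] g - ∑ i ∈ Finset.range (n + 1),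
            (p : S) ^ i * dseq p φ g i ^ p ^ (n + 1 - i) := by
        have hiter : (⇑φ)^[n + 1] g = ∑ i ∈ Finset.range (n + 1),
            (p : S) ^ i * (φ (dseq p φ g i)) ^ p ^ (n - i) := by
          rw [Function.iterate_succ_apply', ← ih, map_sum]
          refine Finset.sum_congr rfl fun i _ => ?_
          rw [map_mul, map_pow, map_pow, map_natCast]
        rw [hiter, ← Finset.sum_sub_distrib]
        have : ∀ i ∈ Finset.range (n + 1), (p : S) ^ (n + 1) ∣
            (p : S) ^ i * (φ (dseq p φ g i)) ^ p ^ (n - i) -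
              (p : S) ^ i * dseq p φ g i ^ p ^ (n + 1 - i) := by
          intro i hi
          rw [Finset.mem_range, Nat.lt_succ_iff] at hi
          rw [← mul_sub]
          have h1 : (p : S) ^ ((n - i) + 1) ∣
              (φ (dseq p φ g i)) ^ p ^ (n - i) - (dseq p φ g i ^ p) ^ p ^ (n - i) :=
            dvd_sub_pow_of_dvd_sub (hφ _) _
          have h2 : dseq p φ g i ^ p ^ (n + 1 - i) = (dseq p φ g i ^ p) ^ p ^ (n - i) := by
            rw [← pow_mul, ← pow_succ']
            have hni : n + 1 - i = n - i + 1 := by omega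
            rw [hni]
          rw [h2]
          have : (p : S) ^ (n + 1) = (p : S) ^ i * (p : S) ^ ((n - i) + 1) := by
            rw [← pow_add]
            congr 1
            omega
          rw [this]
          exact mul_dvd_mul_left _ h1
        obtain ⟨c, hc⟩ := Finset.dvd_sum this
        exact ⟨c, hc.symm⟩
      have := dseq_apply p φ g (n + 1) key
      rw [Finset.sum_range_succ, Nat.sub_self, pow_zero, pow_one, this]
      ring

theorem dwork (hφ : ∀ x : S, (p : S) ∣ φ x - x ^ p) :
    ∃ b : WittVector p S, ∀ n, WittVector.ghostComponent n b = (⇑φ)^[n] g := by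
  refine ⟨WittVector.mk p (dseq p φ g), fun n => ?_⟩
  rw [WittVector.ghostComponent_apply, aeval_wittPolynomial]
  simpa [WittVector.coeff_mk] using dseq_sum p φ g hφ n

end dwork

section flift
variable {S : Type*} [CommRing S] (p : ℕ) [hp : Fact p.Prime] (φ : S →+* S)

theorem fl_mul {x y : S} (hx : (p : S) ∣ φ x - x ^ p) (hy : (p : S) ∣ φ y - y ^ p) :
    (p : S) ∣ φ (x * y) - (x * y) ^ p := by
  have : φ (x * y) - (x * y) ^ p = φ x * (φ y - y ^ p) + y ^ p * (φ x - x ^ p) := by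
    rw [map_mul, mul_pow]; ring
  rw [this]
  exact dvd_add (Dvd.dvd.mul_left hy _) (Dvd.dvd.mul_left hx _)

theorem fl_add {x y : S} (hx : (p : S) ∣ φ x - x ^ p) (hy : (p : S) ∣ φ y - y ^ p) :
    (p : S) ∣ φ (x + y) - (x + y) ^ p := by
  obtain ⟨r, hr⟩ := exists_add_pow_prime_eq hp.out x y
  rw [map_add, hr]
  have : φ x + φ y - (x ^ p + y ^ p + p * x * y * r) =
      (φ x - x ^ p) + (φ y - y ^ p) - p * (x * y * r) := by ring
  rw [this]
  exact dvd_sub (dvd_add hx hy) (dvd_mul_right _ _)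

theorem fl_inv {x y : S} (hxy : x * y = 1) (hx : (p : S) ∣ φ x - x ^ p) :
    (p : S) ∣ φ y - y ^ p := by
  have h1 : φ x * φ y = 1 := by rw [← map_mul, hxy, map_one]
  have h2 : x ^ p * y ^ p = 1 := by rw [← mul_pow, hxy, one_pow]
  have : φ y - y ^ p = φ y * y ^ p * (x ^ p - φ x) := by
    have e1 : φ y * y ^ p * x ^ p = φ y := by
      rw [mul_assoc, mul_comm (y ^ p), h2, mul_one]
    have e2 : φ y * y ^ p * φ x = y ^ p := by
      rw [mul_comm (φ y), mul_assoc, mul_comm (φ y), h1, mul_one]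
    rw [mul_sub, e1, e2]
  rw [this]
  exact Dvd.dvd.mul_left (by simpa using (dvd_neg).mpr hx) _
end flift

section intpoly
variable (p : ℕ) [hp : Fact p.Prime]

/-- base mod-p identity: `[p]_X ≡ (X-1)^(p-1) mod p` in `ℤ[X]`. -/
theorem qan_modp : (p : Polynomial ℤ) ∣ qan (X : Polynomial ℤ) p - (X - 1) ^ (p - 1) := by
  have hmap : Polynomial.map (Int.castRingHom (ZMod p))
      (qan (X : Polynomial ℤ) p - (X - 1) ^ (p - 1)) = 0 := by
    haveI : CharP (Polynomial (ZMod p)) p := Polynomial.instCharP _ -- maybe instance name wrong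
    have hX1 : (X - 1 : Polynomial (ZMod p)) ≠ 0 := by
      intro h
      have := congrArg (fun f => Polynomial.coeff f 1) h
      simp [Polynomial.coeff_one] at this
    have key : qan (X : Polynomial (ZMod p)) p = (X - 1) ^ (p - 1) := by
      apply mul_left_cancel₀ hX1
      have h1 : (X - 1 : Polynomial (ZMod p)) * qan X p = X ^ p - 1 := by
        rw [mul_comm]; exact qan_geom _ _
      have h2 : (X - 1 : Polynomial (ZMod p)) * (X - 1) ^ (p - 1) = (X - 1) ^ p := by
        rw [← pow_succ']
        have hp1 : 1 ≤ p := hp.out.pos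
        congr 1
        omega
      rw [h1, h2, sub_pow_char, one_pow]
    rw [Polynomial.map_sub, Polynomial.map_pow, Polynomial.map_sub, Polynomial.map_one,
      Polynomial.map_X]
    have : Polynomial.map (Int.castRingHom (ZMod p)) (qan (X : Polynomial ℤ) p)
        = qan (X : Polynomial (ZMod p)) p := by
      simp [qan, Polynomial.map_sum]
    rw [this, key, sub_self]
  have : ∀ n, (p : ℤ) ∣ (qan (X : Polynomial ℤ) p - (X - 1) ^ (p - 1)).coeff n := by
    intro n
    have := congrArg (fun f => Polynomial.coeff f n) hmap
    simp only [Polynomial.coeff_map, Polynomial.coeff_zero] at this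
    exact_mod_cast (ZMod.intCast_zmod_eq_zero_iff_dvd _ p).mp this
  have hC : (Polynomial.C (p : ℤ)) ∣ (qan (X : Polynomial ℤ) p - (X - 1) ^ (p - 1)) :=
    (Polynomial.C_dvd_iff_dvd_coeff _ _).mpr this
  simpa using hC

end intpoly

section model
variable (p α : ℕ) [hp : Fact p.Prime]

noncomputable def phi1 : Polynomial ℤ →+* Polynomial ℤ :=
  (Polynomial.aeval (X ^ p : Polynomial ℤ)).toRingHom

noncomputable def lamP : Polynomial ℤ := X * (X ^ p ^ α - 1)

noncomputable def muP : Polynomial ℤ := X ^ (p - 1) * qan ((X : Polynomial ℤ) ^ p ^ α) p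

noncomputable def tP (n : ℕ) : Polynomial ℤ :=
  qan ((X : Polynomial ℤ) ^ p ^ α) (p ^ n) *
    ∑ i ∈ Finset.Icc 1 (p - 1),
      X ^ (i * p ^ (n + α) - 1) * qan ((X : Polynomial ℤ) ^ p ^ (α + n + 1)) (i * p ^ α)

noncomputable def uP : Polynomial ℤ := 1 + lamP p α * tP p α 0

theorem phi1_X_pow (a : ℕ) : phi1 p ((X : Polynomial ℤ) ^ a) = X ^ (a * p) := by
  simp [phi1, ← pow_mul]
  rw [Nat.mul_comm]

theorem phi1_qan (a m : ℕ) :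
    phi1 p (qan ((X : Polynomial ℤ) ^ a) m) = qan ((X : Polynomial ℤ) ^ (a * p)) m := by
  rw [map_qan, phi1_X_pow]

theorem mu_lam : muP p α * lamP p α = phi1 p (lamP p α) := by
  have hp1 : 1 ≤ p := hp.out.pos
  have hq : qan ((X:Polynomial ℤ) ^ p ^ α) p * ((X:Polynomial ℤ) ^ p ^ α - 1)
      = (X:Polynomial ℤ) ^ (p ^ α * p) - 1 := by rw [qan_geom, ← pow_mul]
  have hX : (X:Polynomial ℤ) ^ (p - 1) * X = X ^ p := by
    rw [← pow_succ]
    congr 1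
    omega
  have hrhs : phi1 p (lamP p α) = X ^ p * ((X:Polynomial ℤ) ^ (p ^ α * p) - 1) := by
    rw [lamP]
    simp only [phi1, AlgHom.toRingHom_eq_coe, RingHom.coe_coe, map_mul, map_sub, map_one,
      map_pow, Polynomial.aeval_X, ← pow_mul]
    rw [mul_comm p (p ^ α)]
  rw [hrhs, muP, lamP, ← hq, ← hX]
  ring

theorem mu_modp : (p : Polynomial ℤ) ∣ muP p α - lamP p α ^ (p - 1) := by
  obtain ⟨c, hc⟩ := qan_modp p
  have := congrArg (Polynomial.aeval ((X : Polynomial ℤ) ^ p ^ α) : Polynomial ℤ →ₐ[ℤ] Polynomial ℤ) hc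
  simp only [map_sub, map_pow, map_mul, map_natCast, map_one, Polynomial.aeval_X] at this
  have h0 : (Polynomial.aeval ((X:Polynomial ℤ) ^ p ^ α)) (qan (X : Polynomial ℤ) p)
      = qan ((X:Polynomial ℤ) ^ p ^ α) p := by simp [qan]
  rw [h0] at this
  have key : qan ((X:Polynomial ℤ) ^ p ^ α) p - ((X:Polynomial ℤ) ^ p ^ α - 1) ^ (p - 1)
      = (p : Polynomial ℤ) * Polynomial.aeval ((X : Polynomial ℤ) ^ p ^ α) c := this
  have hfac : muP p α - lamP p α ^ (p - 1)
      = X ^ (p - 1) * (qan ((X:Polynomial ℤ) ^ p ^ α) p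
          - ((X:Polynomial ℤ) ^ p ^ α - 1) ^ (p - 1)) := by
    rw [muP, lamP, mul_pow]
    ring
  rw [hfac, key]
  exact ⟨X ^ (p - 1) * Polynomial.aeval ((X : Polynomial ℤ) ^ p ^ α) c, by ring⟩

theorem mu_step (n : ℕ) : muP p α * phi1 p (tP p α n) = tP p α (n + 1) := by
  have hp1 : 1 ≤ p := hp.out.pos
  have hqan : qan ((X:Polynomial ℤ) ^ p ^ α) p * qan ((X:Polynomial ℤ) ^ (p ^ α * p)) (p ^ n)
      = qan ((X:Polynomial ℤ) ^ p ^ α) (p ^ (n + 1)) := by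
    rw [pow_mul, qan_mul, ← pow_succ']
  have hterm : ∀ i ∈ Finset.Icc 1 (p - 1),
      X ^ (p - 1) * (phi1 p ((X:Polynomial ℤ) ^ (i * p ^ (n + α) - 1) *
          qan ((X:Polynomial ℤ) ^ p ^ (α + n + 1)) (i * p ^ α)))
        = X ^ (i * p ^ (n + 1 + α) - 1) *
            qan ((X:Polynomial ℤ) ^ p ^ (α + (n + 1) + 1)) (i * p ^ α) := by
    intro i hi
    have hi1 : 1 ≤ i := (Finset.mem_Icc.mp hi).1
    have e2 : p ^ (α + n + 1) * p = p ^ (α + (n + 1) + 1) := by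
      rw [← pow_succ]
      congr 1
    have eexp : (p - 1) + (i * p ^ (n + α) - 1) * p = i * p ^ (n + 1 + α) - 1 := by
      have h1 : (1:ℕ) ≤ i * p ^ (n + α) := by
        have : 0 < i * p ^ (n + α) := by positivity
        omega
      have h2 : i * p ^ (n + 1 + α) = (i * p ^ (n + α)) * p := by
        have hee : n + 1 + α = (n + α) + 1 := by omega
        rw [hee, pow_succ]
        ring
      obtain ⟨m, hm⟩ : ∃ m, i * p ^ (n + α) = m + 1 := ⟨i * p ^ (n + α) - 1, by omega⟩
      rw [h2, hm, Nat.add_sub_cancel, add_mul, one_mul]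
      generalize m * p = a
      omega
    rw [map_mul, phi1_qan, phi1_X_pow, e2, ← mul_assoc, ← pow_add, eexp]
  have hsum : (X:Polynomial ℤ) ^ (p - 1) * (∑ i ∈ Finset.Icc 1 (p - 1),
        phi1 p ((X:Polynomial ℤ) ^ (i * p ^ (n + α) - 1) *
          qan ((X:Polynomial ℤ) ^ p ^ (α + n + 1)) (i * p ^ α)))
      = ∑ i ∈ Finset.Icc 1 (p - 1), X ^ (i * p ^ (n + 1 + α) - 1) *
          qan ((X:Polynomial ℤ) ^ p ^ (α + (n + 1) + 1)) (i * p ^ α) := by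
    rw [Finset.mul_sum]
    exact Finset.sum_congr rfl hterm
  calc muP p α * phi1 p (tP p α n)
      = (qan ((X:Polynomial ℤ) ^ p ^ α) p * qan ((X:Polynomial ℤ) ^ (p ^ α * p)) (p ^ n)) *
          ((X:Polynomial ℤ) ^ (p - 1) * ∑ i ∈ Finset.Icc 1 (p - 1),
            phi1 p ((X:Polynomial ℤ) ^ (i * p ^ (n + α) - 1) *
              qan ((X:Polynomial ℤ) ^ p ^ (α + n + 1)) (i * p ^ α))) := by
        rw [tP, map_mul, phi1_qan, map_sum, muP]
        ring
    _ = qan ((X:Polynomial ℤ) ^ p ^ α) (p ^ (n + 1)) *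
          ∑ i ∈ Finset.Icc 1 (p - 1), X ^ (i * p ^ (n + 1 + α) - 1) *
            qan ((X:Polynomial ℤ) ^ p ^ (α + (n + 1) + 1)) (i * p ^ α) := by
        rw [hqan, hsum]
    _ = tP p α (n + 1) := by rw [tP]

theorem fl_phi1 : ∀ f : Polynomial ℤ, (p : Polynomial ℤ) ∣ phi1 p f - f ^ p := by
  intro f
  induction f using Polynomial.induction_on with
  | C a =>
      have h1 : phi1 p (C a) = C a := by simp [phi1]
      have h2 : (p : ℤ) ∣ a - a ^ p := by
        have : ((a - a ^ p : ℤ) : ZMod p) = 0 := by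
          push_cast
          rw [ZMod.pow_card]
          ring
        exact (ZMod.intCast_zmod_eq_zero_iff_dvd _ p).mp this
      obtain ⟨c, hc⟩ := h2
      refine ⟨C c, ?_⟩
      rw [h1, ← Polynomial.C_pow, ← Polynomial.C_sub, hc, map_mul, map_natCast]
  | add f g hf hg => exact fl_add p (phi1 p) hf hg
  | monomial n a h =>
      have hX : (p : Polynomial ℤ) ∣ phi1 p X - X ^ p := by
        simp [phi1]
      have := fl_mul p (phi1 p) h hX
      simpa [mul_assoc, pow_succ] using this

noncomputable def uSeq (n : ℕ) : Polynomial ℤ := (⇑(phi1 p))^[n] (uP p α)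

noncomputable def Msub : Submonoid (Polynomial ℤ) := Submonoid.closure (Set.range (uSeq p α))

abbrev Cloc := Localization (Msub p α)

theorem phi1_mem_Msub {x : Polynomial ℤ} (hx : x ∈ Msub p α) : phi1 p x ∈ Msub p α := by
  induction hx using Submonoid.closure_induction with
  | mem y hy =>
      obtain ⟨n, rfl⟩ := hy
      apply Submonoid.subset_closure
      refine ⟨n + 1, ?_⟩
      simp only [uSeq]
      exact Function.iterate_succ_apply' _ _ _
  | one => rw [map_one]; exact one_mem _
  | mul x y _ _ hx hy => rw [map_mul]; exact mul_mem hx hy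

noncomputable def phiC : Cloc p α →+* Cloc p α :=
  IsLocalization.lift (M := Msub p α)
    (g := (algebraMap (Polynomial ℤ) (Cloc p α)).comp (phi1 p))
    (fun y => by
      simpa using IsLocalization.map_units (Cloc p α)
        (⟨phi1 p y, phi1_mem_Msub p α y.2⟩ : Msub p α))

theorem phiC_algebraMap (f : Polynomial ℤ) :
    phiC p α (algebraMap (Polynomial ℤ) (Cloc p α) f)
      = algebraMap (Polynomial ℤ) (Cloc p α) (phi1 p f) :=
  IsLocalization.lift_eq _ _

theorem fl_phiC : ∀ x : Cloc p α, (p : Cloc p α) ∣ phiC p α x - x ^ p := by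
  intro x
  obtain ⟨⟨r, s⟩, hx⟩ := IsLocalization.surj (Msub p α) x
  have hs : IsUnit (algebraMap (Polynomial ℤ) (Cloc p α) (s : Polynomial ℤ)) :=
    IsLocalization.map_units _ s
  obtain ⟨y, hy⟩ := hs.exists_right_inv
  have hxr : x = algebraMap (Polynomial ℤ) (Cloc p α) r * y := by
    calc x = x * (algebraMap (Polynomial ℤ) (Cloc p α) (s : Polynomial ℤ) * y) := by
          rw [hy, mul_one]
      _ = (x * algebraMap (Polynomial ℤ) (Cloc p α) (s : Polynomial ℤ)) * y := by ring
      _ = algebraMap (Polynomial ℤ) (Cloc p α) r * y := by rw [hx]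
  have hmap : ∀ f : Polynomial ℤ, (p : Cloc p α) ∣
      phiC p α (algebraMap (Polynomial ℤ) (Cloc p α) f)
        - (algebraMap (Polynomial ℤ) (Cloc p α) f) ^ p := by
    intro f
    obtain ⟨c, hc⟩ := fl_phi1 p f
    refine ⟨algebraMap (Polynomial ℤ) (Cloc p α) c, ?_⟩
    rw [phiC_algebraMap, ← map_pow, ← map_sub, hc]
    push_cast
    ring
  have hyinv : (p : Cloc p α) ∣ phiC p α y - y ^ p :=
    fl_inv p (phiC p α) hy (hmap (s : Polynomial ℤ))
  rw [hxr]
  exact fl_mul p (phiC p α) (hmap r) hyinv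

noncomputable def relP : Polynomial (Cloc p α) :=
  X ^ 2 - C (algebraMap (Polynomial ℤ) (Cloc p α) (lamP p α)) * X

noncomputable def jmap : Polynomial ℤ →+* AdjoinRoot (relP p α) :=
  (AdjoinRoot.of (relP p α)).comp (algebraMap (Polynomial ℤ) (Cloc p α))

noncomputable def eps1 : AdjoinRoot (relP p α) := AdjoinRoot.root (relP p α)

theorem jmap_apply (f : Polynomial ℤ) :
    jmap p α f = AdjoinRoot.of (relP p α) (algebraMap (Polynomial ℤ) (Cloc p α) f) := rfl

theorem eps1_sq : eps1 p α ^ 2 = jmap p α (lamP p α) * eps1 p α := by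
  have h := AdjoinRoot.mk_self (f := relP p α)
  rw [relP, map_sub, map_mul, map_pow, AdjoinRoot.mk_X, AdjoinRoot.mk_C, sub_eq_zero] at h
  exact h

theorem eps1_pow (m : ℕ) : eps1 p α ^ (m + 1) = jmap p α (lamP p α) ^ m * eps1 p α := by
  induction m with
  | zero => simp
  | succ m ih =>
      rw [pow_succ, ih, mul_assoc, ← sq, eps1_sq p α, pow_succ]
      ring

theorem eval₂_relP {T : Type*} [CommRing T] (F : Cloc p α →+* T) (x : T) :
    Polynomial.eval₂ F x (relP p α)
      = x ^ 2 - F (algebraMap (Polynomial ℤ) (Cloc p α) (lamP p α)) * x := by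
  rw [relP]
  simp

noncomputable def phiR : AdjoinRoot (relP p α) →+* AdjoinRoot (relP p α) :=
  AdjoinRoot.lift ((AdjoinRoot.of (relP p α)).comp (phiC p α))
    (jmap p α (muP p α) * eps1 p α) (by
      have hsq : (jmap p α (muP p α) * eps1 p α) ^ 2
          = jmap p α (muP p α) ^ 2 * (jmap p α (lamP p α) * eps1 p α) := by
        rw [mul_pow, eps1_sq p α]
      rw [eval₂_relP, RingHom.comp_apply, phiC_algebraMap, ← mu_lam, map_mul, map_mul,
        ← jmap_apply, ← jmap_apply, hsq]
      ring)

theorem phiR_of (x : Cloc p α) :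
    phiR p α (AdjoinRoot.of (relP p α) x) = AdjoinRoot.of (relP p α) (phiC p α x) :=
  AdjoinRoot.lift_of _

theorem phiR_root : phiR p α (eps1 p α) = jmap p α (muP p α) * eps1 p α :=
  AdjoinRoot.lift_root _

theorem phiR_jmap (f : Polynomial ℤ) : phiR p α (jmap p α f) = jmap p α (phi1 p f) := by
  rw [jmap, RingHom.comp_apply, phiR_of, phiC_algebraMap]
  rfl

theorem fl_phiR : ∀ x : AdjoinRoot (relP p α), (p : AdjoinRoot (relP p α)) ∣ phiR p α x - x ^ p := by
  have hofdvd : ∀ c : Cloc p α, (p : AdjoinRoot (relP p α)) ∣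
      phiR p α (AdjoinRoot.of (relP p α) c) - (AdjoinRoot.of (relP p α) c) ^ p := by
    intro c
    obtain ⟨d, hd⟩ := fl_phiC p α c
    refine ⟨AdjoinRoot.of (relP p α) d, ?_⟩
    rw [phiR_of, ← map_pow, ← map_sub, hd, map_mul, map_natCast]
  have heps : (p : AdjoinRoot (relP p α)) ∣ phiR p α (eps1 p α) - (eps1 p α) ^ p := by
    have hp1 : p - 1 + 1 = p := Nat.succ_pred_eq_of_pos hp.out.pos
    have hpow : eps1 p α ^ p = jmap p α (lamP p α ^ (p - 1)) * eps1 p α := by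
      rw [map_pow, ← eps1_pow, hp1]
    obtain ⟨c, hc⟩ := mu_modp p α
    refine ⟨jmap p α c * eps1 p α, ?_⟩
    rw [phiR_root, hpow, ← sub_mul, ← map_sub, hc, map_mul, map_natCast]
    ring
  intro x
  induction x using AdjoinRoot.induction_on with
  | ih f =>
    induction f using Polynomial.induction_on with
    | C c => rw [AdjoinRoot.mk_C]; exact hofdvd c
    | add f g hf hg => rw [map_add]; exact fl_add p (phiR p α) hf hg
    | monomial n a h =>
        have : (AdjoinRoot.mk (relP p α)) (C a * X ^ (n + 1))
            = (AdjoinRoot.mk (relP p α)) (C a * X ^ n) * eps1 p α := by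
          rw [eps1, ← AdjoinRoot.mk_X, ← map_mul]
          congr 1
          ring
        rw [this]
        exact fl_mul p (phiR p α) h heps

noncomputable def gseq (n : ℕ) : AdjoinRoot (relP p α) := 1 + eps1 p α * jmap p α (tP p α n)

theorem phiR_gseq (n : ℕ) : phiR p α (gseq p α n) = gseq p α (n + 1) := by
  rw [gseq, map_add, map_one, map_mul, phiR_root, phiR_jmap, gseq, ← mu_step p α n, map_mul]
  ring

theorem gseq_iter (n : ℕ) : (⇑(phiR p α))^[n] (gseq p α 0) = gseq p α n := by
  induction n with
  | zero => simp
  | succ n ih => rw [Function.iterate_succ_apply', ih, phiR_gseq]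

theorem g0_unit : ∃ w : AdjoinRoot (relP p α), gseq p α 0 * w = 1 := by
  have humem : uP p α ∈ Msub p α := Submonoid.subset_closure ⟨0, rfl⟩
  have hu : IsUnit (jmap p α (uP p α)) := by
    have := IsLocalization.map_units (Cloc p α) (⟨uP p α, humem⟩ : Msub p α)
    exact this.map (AdjoinRoot.of (relP p α))
  obtain ⟨v, hv⟩ := hu.exists_right_inv
  have huP : jmap p α (uP p α) = 1 + jmap p α (lamP p α) * jmap p α (tP p α 0) := by
    rw [uP, map_add, map_one, map_mul]
  rw [huP] at hv
  refine ⟨1 - eps1 p α * (jmap p α (tP p α 0) * v), ?_⟩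
  have hsq := eps1_sq p α
  rw [gseq]
  linear_combination (-(jmap p α (tP p α 0))^2 * v) * hsq
    + (-(eps1 p α * jmap p α (tP p α 0))) * hv

end model

section realring
variable (p α : ℕ) [hp : Fact p.Prime] (k : Type*) [Field k] [CharP k p]

theorem relPoly_monic : (relPoly p α k).Monic := by
  rw [relPoly]
  exact Polynomial.monic_X_pow_sub
    (lt_of_le_of_lt (Polynomial.degree_C_mul_X_le _) (by norm_num))

theorem pA_ne_zero : (p : PowerSeries (WittVector p k)) ≠ 0 := by
  intro h
  have := congrArg (PowerSeries.constantCoeff (R := WittVector p k)) h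
  rw [map_natCast, map_zero] at this
  exact WittVector.p_nonzero p k this

theorem p_mul_injR : ∀ x : Rring p α k, (p : Rring p α k) * x = 0 → x = 0 := by
  intro x hx
  set A := PowerSeries (WittVector p k)
  have pb := AdjoinRoot.powerBasis' (relPoly_monic p α k)
  have h1 : ((p : A) • x) = 0 := by
    rw [Algebra.smul_def, map_natCast]
    exact hx
  have h2 := congrArg pb.basis.repr h1
  rw [map_smul, map_zero] at h2
  have h3 : pb.basis.repr x = 0 := by
    apply Finsupp.ext
    intro i
    have := congrFun (congrArg (DFunLike.coe) h2) i
    rw [Finsupp.smul_apply, smul_eq_mul] at this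
    rcases mul_eq_zero.mp this with h | h
    · exact absurd h (pA_ne_zero p k)
    · simpa using h
  have h4 : pb.basis.repr x = pb.basis.repr 0 := by rw [h3, map_zero]
  exact pb.basis.repr.injective h4

theorem ghost_inj {T : Type*} [CommRing T]
    (htf : ∀ x : T, (p : T) * x = 0 → x = 0)
    {x y : WittVector p T} (h : ∀ n, WittVector.ghostComponent n x = WittVector.ghostComponent n y) :
    x = y := by
  have hpow : ∀ (n : ℕ) (z : T), (p : T) ^ n * z = 0 → z = 0 := by
    intro n
    induction n with
    | zero => intro z hz; simpa using hz
    | succ n ih =>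
        intro z hz
        have : (p : T) ^ n * ((p : T) * z) = 0 := by rw [← hz]; ring
        exact htf z (ih _ this)
  apply WittVector.ext
  intro n
  induction n using Nat.strong_induction_on with
  | _ n ih =>
    have hn := h n
    rw [WittVector.ghostComponent_apply, WittVector.ghostComponent_apply,
      aeval_wittPolynomial, aeval_wittPolynomial, Finset.sum_range_succ,
      Finset.sum_range_succ] at hn
    have hsum : ∑ i ∈ Finset.range n, (p : T) ^ i * x.coeff i ^ p ^ (n - i)
        = ∑ i ∈ Finset.range n, (p : T) ^ i * y.coeff i ^ p ^ (n - i) :=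
      Finset.sum_congr rfl fun i hi => by rw [ih i (Finset.mem_range.mp hi)]
    rw [hsum, Nat.sub_self, pow_zero, pow_one, pow_one] at hn
    have hcancel : (p : T) ^ n * x.coeff n = (p : T) ^ n * y.coeff n := add_left_cancel hn
    have : (p : T) ^ n * (x.coeff n - y.coeff n) = 0 := by
      rw [mul_sub, hcancel, sub_self]
    exact sub_eq_zero.mp (hpow n _ this)
end realring

section realmap
variable (p α : ℕ) [hp : Fact p.Prime] (k : Type*) [Field k] [CharP k p]

noncomputable def hA : Polynomial ℤ →+* PowerSeries (WittVector p k) :=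
  (Polynomial.aeval (qq p k)).toRingHom

theorem constCoeff_hA (f : Polynomial ℤ) :
    PowerSeries.constantCoeff (R := WittVector p k) (hA p k f)
      = Polynomial.aeval (1 : WittVector p k) f := by
  have h1 : hA p k f = Polynomial.eval₂ (algebraMap ℤ _) (qq p k) f := rfl
  rw [h1, Polynomial.hom_eval₂]
  have hq : PowerSeries.constantCoeff (R := WittVector p k) (qq p k) = 1 := by
    simp [qq]
  rw [hq, Polynomial.aeval_def]
  congr 1

theorem aeval_one_phi1 (f : Polynomial ℤ) :
    Polynomial.aeval (1 : WittVector p k) (phi1 p f)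
      = Polynomial.aeval (1 : WittVector p k) f := by
  have h := Polynomial.aeval_algHom_apply
    (Polynomial.aeval (1 : WittVector p k) : Polynomial ℤ →ₐ[ℤ] WittVector p k)
    ((X : Polynomial ℤ) ^ p) f
  rw [phi1]
  simp only [AlgHom.toRingHom_eq_coe, RingHom.coe_coe]
  rw [← h]
  simp

theorem aeval_one_uSeq (n : ℕ) :
    Polynomial.aeval (1 : WittVector p k) (uSeq p α n) = 1 := by
  induction n with
  | zero =>
      simp [uSeq, uP, lamP]
  | succ n ih =>
      rw [uSeq, Function.iterate_succ_apply', ← uSeq, aeval_one_phi1, ih]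

theorem hA_unit : ∀ y : Msub p α, IsUnit (hA p k (y : Polynomial ℤ)) := by
  rintro ⟨y, hy⟩
  simp only
  induction hy using Submonoid.closure_induction with
  | mem z hz =>
      obtain ⟨n, rfl⟩ := hz
      rw [PowerSeries.isUnit_iff_constantCoeff, constCoeff_hA, aeval_one_uSeq]
      exact isUnit_one
  | one => rw [map_one]; exact isUnit_one
  | mul a b _ _ ha hb => rw [map_mul]; exact ha.mul hb

noncomputable def hC : Cloc p α →+* PowerSeries (WittVector p k) :=
  IsLocalization.lift (M := Msub p α) (g := hA p k) (hA_unit p α k)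

theorem hC_algebraMap (f : Polynomial ℤ) :
    hC p α k (algebraMap (Polynomial ℤ) (Cloc p α) f) = hA p k f :=
  IsLocalization.lift_eq _ _

theorem hA_lamP : hA p k (lamP p α) = qq p k * ((qq p k) ^ p ^ α - 1) := by
  simp [hA, lamP]

theorem eps_sq : eps p α k ^ 2
    = algebraMap _ _ (qq p k * ((qq p k) ^ p ^ α - 1)) * eps p α k := by
  have h : (AdjoinRoot.mk (relPoly p α k))
      (Polynomial.X ^ 2 - Polynomial.C (qq p k * ((qq p k) ^ p ^ α - 1)) * Polynomial.X) = 0 :=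
    AdjoinRoot.mk_self
  simp only [map_sub, map_mul, map_pow, AdjoinRoot.mk_X, AdjoinRoot.mk_C, sub_eq_zero] at h
  rw [AdjoinRoot.algebraMap_eq]
  simpa [eps] using h

noncomputable def hR : AdjoinRoot (relP p α) →+* Rring p α k :=
  AdjoinRoot.lift ((algebraMap (PowerSeries (WittVector p k)) (Rring p α k)).comp (hC p α k))
    (eps p α k) (by
      rw [eval₂_relP, RingHom.comp_apply, hC_algebraMap, hA_lamP, ← eps_sq]
      ring)

theorem hR_root : hR p α k (eps1 p α) = eps p α k := AdjoinRoot.lift_root _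

theorem hR_jmap (f : Polynomial ℤ) :
    hR p α k (jmap p α f) = algebraMap _ _ (hA p k f) := by
  rw [jmap, RingHom.comp_apply, hR, AdjoinRoot.lift_of, RingHom.comp_apply, hC_algebraMap]

theorem hA_tP (n : ℕ) : hA p k (tP p α n)
    = qan ((qq p k) ^ p ^ α) (p ^ n) *
        ∑ i ∈ Finset.Icc 1 (p - 1),
          (qq p k) ^ (i * p ^ (n + α) - 1) *
            qan ((qq p k) ^ p ^ (α + n + 1)) (i * p ^ α) := by
  simp [hA, tP, qan]

theorem hR_gseq (n : ℕ) :
    hR p α k (gseq p α n) = 1 + eps p α k * algebraMap _ _ (hA p k (tP p α n)) := by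
  rw [gseq, map_add, map_one, map_mul, hR_root, hR_jmap]

theorem ghost_map_comm {T U : Type*} [CommRing T] [CommRing U] (f : T →+* U)
    (x : WittVector p T) (n : ℕ) :
    WittVector.ghostComponent n (WittVector.map f x)
      = f (WittVector.ghostComponent n x) := by
  rw [WittVector.ghostComponent_apply, WittVector.ghostComponent_apply, aeval_wittPolynomial,
    aeval_wittPolynomial, map_sum]
  refine Finset.sum_congr rfl fun i hi => ?_
  rw [map_mul, map_pow, map_pow, map_natCast, WittVector.map_coeff]

end realmap

end StmtAux

open StmtAux in
/-- There exists a unique Witt vector `b ∈ 𝕎(R)` whose `n`-th ghost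
component is `1 + ε·[p^n]_{q^{p^α}}·∑_{i=1}^{p−1} q^{i·p^{n+α}−1}·[i·p^α]_{q^{p^{α+n+1}}}`
for every `n ≥ 0`; moreover any such `b` is a unit of `𝕎(R)`. -/
theorem stmt4 (p : ℕ) [Fact p.Prime] (α : ℕ)
    (k : Type*) [Field k] [CharP k p] [PerfectRing k p] :
    (∃! b : WittVector p (Rring p α k), ∀ n : ℕ,
      WittVector.ghostComponent n b =
        1 + eps p α k *
          algebraMap _ _ (qan ((qq p k) ^ p ^ α) (p ^ n) *
            ∑ i ∈ Finset.Icc 1 (p - 1),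
              (qq p k) ^ (i * p ^ (n + α) - 1) *
                qan ((qq p k) ^ p ^ (α + n + 1)) (i * p ^ α))) ∧
    (∀ b : WittVector p (Rring p α k), (∀ n : ℕ,
      WittVector.ghostComponent n b =
        1 + eps p α k *
          algebraMap _ _ (qan ((qq p k) ^ p ^ α) (p ^ n) *
            ∑ i ∈ Finset.Icc 1 (p - 1),
              (qq p k) ^ (i * p ^ (n + α) - 1) *
                qan ((qq p k) ^ p ^ (α + n + 1)) (i * p ^ α))) → IsUnit b) := by
  have htf := p_mul_injR p α k
  obtain ⟨b1, hb1⟩ := dwork p (phiR p α) (gseq p α 0) (fl_phiR p α)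
  obtain ⟨w, hw⟩ := g0_unit p α
  obtain ⟨b2, hb2⟩ := dwork p (phiR p α) w (fl_phiR p α)
  have hbg : ∀ n : ℕ, WittVector.ghostComponent n (WittVector.map (hR p α k) b1)
      = 1 + eps p α k * algebraMap _ _ (qan ((qq p k) ^ p ^ α) (p ^ n) *
          ∑ i ∈ Finset.Icc 1 (p - 1), (qq p k) ^ (i * p ^ (n + α) - 1) *
            qan ((qq p k) ^ p ^ (α + n + 1)) (i * p ^ α)) := by
    intro n
    rw [ghost_map_comm, hb1 n, gseq_iter, hR_gseq, hA_tP]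
  have hbb2 : WittVector.map (hR p α k) b1 * WittVector.map (hR p α k) b2 = 1 := by
    apply ghost_inj p htf
    intro n
    rw [map_mul, map_one, ghost_map_comm, ghost_map_comm, hb1 n, hb2 n, ← map_mul,
      ← iterate_map_mul, hw, iterate_map_one, map_one]
  constructor
  · exact ⟨WittVector.map (hR p α k) b1, hbg,
      fun y hy => ghost_inj p htf (fun n => by rw [hy n, hbg n])⟩
  · intro y hy
    have hyb : y = WittVector.map (hR p α k) b1 :=
      ghost_inj p htf (fun n => by rw [hy n, hbg n])
    rw [hyb]
    exact IsUnit.of_mul_eq_one _ hbb2
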